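/- arXiv:0705.3790 — 2 statements merged into one kernel-verified Lean document; each statement's English description precedes it below -/
import Mathlib

section
/- Let n ≥ 1, let k > 0 be a real constant, and let S : ℝ → (Hermitian complex n×n matrices) be differentiable with Re trace(exp(−S(λ)/k)) = 1 for all λ ∈ ℝ. Then for every λ, trace(exp(−S(λ)/k)·S'(λ)) = 0, where S'(λ) is the derivative of S at λ. -/
open Matrix

attribute [local instance] Matrix.linftyOpNormedRing Matrix.linftyOpNormedAlgebra

set_option maxHeartbeats 1000000

open NormedSpace

variable {n : ℕ}

noncomputable abbrev matNormTop (n : ℕ) : TopologicalSpace (Matrix (Fin n) (Fin n) ℂ) :=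
  PseudoMetricSpace.toUniformSpace.toTopologicalSpace

section

attribute [local instance] matNormTop

noncomputable def traceCLM (n : ℕ) : Matrix (Fin n) (Fin n) ℂ →L[ℂ] ℂ :=
  LinearMap.toContinuousLinearMap (Matrix.traceLinearMap (Fin n) ℂ ℂ)

@[simp] lemma traceCLM_apply (M : Matrix (Fin n) (Fin n) ℂ) : traceCLM n M = M.trace := rfl

lemma norm_trace_le (M : Matrix (Fin n) (Fin n) ℂ) : ‖M.trace‖ ≤ n * ‖M‖ := by
  have hentry : ∀ i : Fin n, ‖M i i‖ ≤ ‖M‖ := by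
    intro i
    have h1 : ‖M i i‖₊ ≤ ∑ j, ‖M i j‖₊ :=
      Finset.single_le_sum (f := fun j => ‖M i j‖₊) (fun _ _ => zero_le) (Finset.mem_univ i)
    have h2 : (∑ j, ‖M i j‖₊) ≤ ‖M‖₊ := by
      rw [Matrix.linfty_opNNNorm_def]
      exact Finset.le_sup (f := fun i => ∑ j, ‖M i j‖₊) (Finset.mem_univ i)
    exact_mod_cast h1.trans h2
  calc ‖M.trace‖ ≤ ∑ i, ‖M i i‖ := norm_sum_le _ _
    _ ≤ ∑ _i : Fin n, ‖M‖ := Finset.sum_le_sum fun i _ => hentry i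
    _ = n * ‖M‖ := by simp [Finset.sum_const, nsmul_eq_mul]

noncomputable def mulLCLM (X : Matrix (Fin n) (Fin n) ℂ) :
    Matrix (Fin n) (Fin n) ℂ →L[ℂ] Matrix (Fin n) (Fin n) ℂ :=
  ContinuousLinearMap.mul ℂ _ X

noncomputable def mulRCLM (X : Matrix (Fin n) (Fin n) ℂ) :
    Matrix (Fin n) (Fin n) ℂ →L[ℂ] Matrix (Fin n) (Fin n) ℂ :=
  (ContinuousLinearMap.mul ℂ _).flip X

@[simp] lemma mulLCLM_apply (X H : Matrix (Fin n) (Fin n) ℂ) : mulLCLM X H = X * H := rfl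
@[simp] lemma mulRCLM_apply (X H : Matrix (Fin n) (Fin n) ℂ) : mulRCLM X H = H * X := rfl

noncomputable def Qpow (m : ℕ) (X : Matrix (Fin n) (Fin n) ℂ) :
    Matrix (Fin n) (Fin n) ℂ →L[ℂ] Matrix (Fin n) (Fin n) ℂ :=
  ∑ i ∈ Finset.range m, (mulRCLM (X ^ (m - 1 - i))).comp (mulLCLM (X ^ i))

lemma Qpow_apply (m : ℕ) (X H : Matrix (Fin n) (Fin n) ℂ) :
    Qpow m X H = ∑ i ∈ Finset.range m, X ^ i * H * X ^ (m - 1 - i) := by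
  simp [Qpow, ContinuousLinearMap.sum_apply]

lemma hasFDerivAt_matPow (m : ℕ) (X : Matrix (Fin n) (Fin n) ℂ) :
    HasFDerivAt (fun M : Matrix (Fin n) (Fin n) ℂ => M ^ m) (Qpow m X) X := by
  induction m with
  | zero =>
      have : (Qpow 0 X : Matrix (Fin n) (Fin n) ℂ →L[ℂ] _) = 0 := by
        simp [Qpow]
      rw [this]
      simpa using hasFDerivAt_const (1 : Matrix (Fin n) (Fin n) ℂ) X
  | succ m ih =>
      have h := ih.mul' (hasFDerivAt_id X)
      have heq : (X ^ m • ContinuousLinearMap.id ℂ _ + (Qpow m X).smulRight X)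
          = Qpow (m + 1) X := by
        refine ContinuousLinearMap.ext fun H => ?_
        simp only [ContinuousLinearMap.add_apply, ContinuousLinearMap.smul_apply,
          ContinuousLinearMap.id_apply, ContinuousLinearMap.smulRight_apply,
          smul_eq_mul, Qpow_apply, Finset.sum_range_succ]
        rw [Finset.sum_mul]
        have hterm : ∀ i ∈ Finset.range m,
            X ^ i * H * X ^ (m - 1 - i) * X = X ^ i * H * X ^ (m + 1 - 1 - i) := by
          intro i hi
          rw [Finset.mem_range] at hi
          rw [mul_assoc, ← pow_succ]
          congr 2
          omega
        rw [Finset.sum_congr rfl hterm]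
        have : m + 1 - 1 - m = 0 := by omega
        rw [this, pow_zero, mul_one, add_comm]
      rw [← heq]
      have hfun : (fun M : Matrix (Fin n) (Fin n) ℂ => M ^ (m + 1))
          = fun M => M ^ m * M := by
        funext M; rw [pow_succ]
      rw [hfun]
      exact h

lemma trace_Qpow (m : ℕ) (X H : Matrix (Fin n) (Fin n) ℂ) :
    (Qpow m X H).trace = (m : ℂ) * (X ^ (m - 1) * H).trace := by
  rw [Qpow_apply, Matrix.trace_sum]
  have hterm : ∀ i ∈ Finset.range m,
      (X ^ i * H * X ^ (m - 1 - i)).trace = (X ^ (m - 1) * H).trace := by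
    intro i hi
    rw [Finset.mem_range] at hi
    rw [Matrix.trace_mul_comm, ← mul_assoc, ← pow_add]
    have : m - 1 - i + i = m - 1 := by omega
    rw [this]
  rw [Finset.sum_congr rfl hterm, Finset.sum_const, Finset.card_range, nsmul_eq_mul]

noncomputable def expTraceDeriv (X : Matrix (Fin n) (Fin n) ℂ) :
    Matrix (Fin n) (Fin n) ℂ →L[ℂ] ℂ :=
  (traceCLM n).comp (mulLCLM (exp X))

@[simp] lemma expTraceDeriv_apply (X H : Matrix (Fin n) (Fin n) ℂ) :
    expTraceDeriv X H = (exp X * H).trace := rfl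

lemma hasFDerivAt_trace_exp (hn : 1 ≤ n) (X : Matrix (Fin n) (Fin n) ℂ) :
    HasFDerivAt (fun M : Matrix (Fin n) (Fin n) ℂ => (exp M).trace)
      (expTraceDeriv X) X := by
  haveI : Nonempty (Fin n) := ⟨⟨0, hn⟩⟩
  set R : ℝ := ‖X‖ + 1 with hR
  have hR1 : (1 : ℝ) ≤ R := by rw [hR]; linarith [norm_nonneg X]
  have hR0 : (0 : ℝ) < R := lt_of_lt_of_le one_pos hR1
  set f : ℕ → Matrix (Fin n) (Fin n) ℂ → ℂ :=
    fun m M => ((m.factorial : ℂ))⁻¹ * (M ^ m).trace with hf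
  set f' : ℕ → Matrix (Fin n) (Fin n) ℂ → Matrix (Fin n) (Fin n) ℂ →L[ℂ] ℂ :=
    fun m Y => ((m.factorial : ℂ))⁻¹ • (m : ℂ) •
      ((traceCLM n).comp (mulLCLM (Y ^ (m - 1)))) with hf'
  set u : ℕ → ℝ := fun m => ((m.factorial : ℝ))⁻¹ * m * (n * R ^ (m - 1)) with hu
  have hupos : ∀ m, (0 : ℝ) ≤ u m := by
    intro m
    simp only [hu]
    positivity
  have hderivs : ∀ m (Y : Matrix (Fin n) (Fin n) ℂ), HasFDerivAt (f m) (f' m Y) Y := by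
    intro m Y
    have h1 : HasFDerivAt (fun M : Matrix (Fin n) (Fin n) ℂ => (M ^ m).trace)
        ((traceCLM n).comp (Qpow m Y)) Y :=
      (traceCLM n).hasFDerivAt.comp Y (hasFDerivAt_matPow m Y)
    have h2 := h1.const_mul ((m.factorial : ℂ))⁻¹
    have h3 : (traceCLM n).comp (Qpow m Y)
        = (m : ℂ) • ((traceCLM n).comp (mulLCLM (Y ^ (m - 1)))) := by
      refine ContinuousLinearMap.ext fun H => ?_
      simp [trace_Qpow]
    rw [h3] at h2
    exact h2
  have hbound : ∀ m (Y : Matrix (Fin n) (Fin n) ℂ),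
      Y ∈ Metric.ball (0 : Matrix (Fin n) (Fin n) ℂ) R → ‖f' m Y‖ ≤ u m := by
    intro m Y hY
    rw [Metric.mem_ball, dist_zero_right] at hY
    have hYR : ‖Y‖ ≤ R := le_of_lt hY
    refine ContinuousLinearMap.opNorm_le_bound _ (hupos m) fun H => ?_
    have hval : f' m Y H = ((m.factorial : ℂ))⁻¹ * (m : ℂ) * ((Y ^ (m - 1) * H).trace) := by
      simp [hf', mul_assoc]
    rw [hval]
    have htr : ‖((Y ^ (m - 1) * H).trace)‖ ≤ n * (R ^ (m - 1) * ‖H‖) := by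
      refine (norm_trace_le _).trans ?_
      have h1 : ‖Y ^ (m - 1) * H‖ ≤ ‖Y ^ (m - 1)‖ * ‖H‖ := norm_mul_le _ _
      have h2 : ‖Y ^ (m - 1)‖ ≤ ‖Y‖ ^ (m - 1) := norm_pow_le _ _
      have h3 : ‖Y‖ ^ (m - 1) ≤ R ^ (m - 1) := pow_le_pow_left₀ (norm_nonneg _) hYR _
      have := mul_le_mul (h2.trans h3) le_rfl (norm_nonneg H)
        (by positivity : (0:ℝ) ≤ R ^ (m - 1))
      nlinarith [h1, norm_nonneg H, norm_nonneg (Y ^ (m-1) * H), Nat.cast_nonneg (α := ℝ) n]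
    rw [norm_mul, norm_mul, norm_inv]
    simp only [Complex.norm_natCast]
    calc (↑m.factorial : ℝ)⁻¹ * ↑m * ‖((Y ^ (m - 1) * H).trace)‖
        ≤ (↑m.factorial : ℝ)⁻¹ * ↑m * (n * (R ^ (m - 1) * ‖H‖)) := by
          have hnn : (0:ℝ) ≤ (↑m.factorial : ℝ)⁻¹ * ↑m := by positivity
          exact mul_le_mul_of_nonneg_left htr hnn
      _ = u m * ‖H‖ := by simp only [hu]; ring
  have hsumu : Summable u := by
    have hshift : ∀ m : ℕ, u (m + 1) = n * (R ^ m / m.factorial) := by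
      intro m
      simp only [hu, Nat.factorial_succ, Nat.add_sub_cancel]
      push_cast
      have hm : ((m : ℝ) + 1) ≠ 0 := by positivity
      have hf0 : ((m.factorial : ℝ)) ≠ 0 := by exact_mod_cast m.factorial_ne_zero
      field_simp
    have h1 : Summable fun m : ℕ => u (m + 1) := by
      simp_rw [hshift]
      exact (Real.summable_pow_div_factorial R).mul_left _
    exact (summable_nat_add_iff 1).mp h1
  have hsum0 : Summable fun m => f m X := by
    refine Summable.of_norm_bounded (g := fun m => (n : ℝ) * (‖X‖ ^ m / m.factorial))
      ((Real.summable_pow_div_factorial ‖X‖).mul_left _) fun m => ?_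
    simp only [hf, norm_mul, norm_inv, Complex.norm_natCast]
    have := (norm_trace_le (X ^ m)).trans
      (by nlinarith [norm_pow_le X m, Nat.cast_nonneg (α := ℝ) n] :
        (n : ℝ) * ‖X ^ m‖ ≤ n * ‖X‖ ^ m)
    have hfac : (0:ℝ) ≤ ((m.factorial : ℝ))⁻¹ := by positivity
    calc (↑m.factorial : ℝ)⁻¹ * ‖(X ^ m).trace‖ ≤ (↑m.factorial : ℝ)⁻¹ * ((n:ℝ) * ‖X‖ ^ m) :=
          mul_le_mul_of_nonneg_left this hfac
      _ = (n : ℝ) * (‖X‖ ^ m / m.factorial) := by ring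
  have hXmem : X ∈ Metric.ball (0 : Matrix (Fin n) (Fin n) ℂ) R := by
    rw [Metric.mem_ball, dist_zero_right, hR]; linarith
  have key := hasFDerivAt_tsum_of_isPreconnected hsumu Metric.isOpen_ball
    (convex_ball (0 : Matrix (Fin n) (Fin n) ℂ) R).isPreconnected
    (fun m Y _ => hderivs m Y) hbound hXmem hsum0 hXmem
  -- identify the function
  have hfun : (fun Y : Matrix (Fin n) (Fin n) ℂ => ∑' m, f m Y)
      = fun Y => (exp Y).trace := by
    funext Y
    have hexp' : exp Y = ∑' m, ((m.factorial : ℂ))⁻¹ • Y ^ m := by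
      rw [exp_eq_tsum ℂ]
    rw [hexp']
    show ∑' m, f m Y = traceCLM n (∑' m, ((m.factorial : ℂ))⁻¹ • Y ^ m)
    rw [(traceCLM n).map_tsum (expSeries_summable' (𝕂 := ℂ) Y)]
    refine tsum_congr fun m => ?_
    simp [hf, Matrix.trace_smul, smul_eq_mul]
  -- identify the derivative
  have hsumf' : Summable fun m => f' m X :=
    Summable.of_norm_bounded hsumu fun m => hbound m X hXmem
  have hder : (∑' m, f' m X) = expTraceDeriv X := by
    refine ContinuousLinearMap.ext fun H => ?_
    have happ : (∑' m, f' m X) H = ∑' m, f' m X H :=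
      (ContinuousLinearMap.apply ℂ ℂ H).map_tsum hsumf'
    rw [happ]
    have hsumapp : Summable fun m => f' m X H :=
      hsumf'.map (ContinuousLinearMap.apply ℂ ℂ H) (ContinuousLinearMap.apply ℂ ℂ H).continuous
    rw [hsumapp.tsum_eq_zero_add]
    have h0 : f' 0 X H = 0 := by simp [hf']
    have hsucc : ∀ m : ℕ,
        f' (m + 1) X H = (traceCLM n).comp (mulRCLM H) (((m.factorial : ℂ))⁻¹ • X ^ m) := by
      intro m
      have hco : (((m+1).factorial : ℂ))⁻¹ * ((m : ℂ) + 1) = ((m.factorial : ℂ))⁻¹ := by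
        rw [Nat.factorial_succ]
        push_cast
        have h1 : ((m : ℂ) + 1) ≠ 0 := Nat.cast_add_one_ne_zero m
        have h2 : ((m.factorial : ℂ)) ≠ 0 := Nat.cast_ne_zero.mpr m.factorial_ne_zero
        field_simp
      simp only [hf', ContinuousLinearMap.smul_apply, ContinuousLinearMap.comp_apply,
        mulLCLM_apply, mulRCLM_apply, traceCLM_apply, Nat.add_sub_cancel, smul_eq_mul,
        Matrix.smul_mul, Matrix.trace_smul]
      rw [← mul_assoc]
      have hc2 : ((m + 1 : ℕ) : ℂ) = ((m : ℂ) + 1) := by push_cast; ring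
      rw [hc2, hco]
    rw [h0, zero_add]
    have hexp' : exp X = ∑' m, ((m.factorial : ℂ))⁻¹ • X ^ m := by
      rw [exp_eq_tsum ℂ]
    have step1 : (∑' m, f' (m + 1) X H)
        = ∑' m, (traceCLM n).comp (mulRCLM H) (((m.factorial : ℂ))⁻¹ • X ^ m) :=
      tsum_congr fun m => hsucc m
    have step2 : (∑' m, (traceCLM n).comp (mulRCLM H) (((m.factorial : ℂ))⁻¹ • X ^ m))
        = (traceCLM n).comp (mulRCLM H) (∑' m, ((m.factorial : ℂ))⁻¹ • X ^ m) :=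
      (((traceCLM n).comp (mulRCLM H)).map_tsum (expSeries_summable' (𝕂 := ℂ) X)).symm
    rw [step1, step2, ← hexp']
    simp only [ContinuousLinearMap.comp_apply, mulRCLM_apply, traceCLM_apply,
      expTraceDeriv_apply]
  rw [hfun, hder] at key
  exact key

noncomputable def ctCLM (n : ℕ) : Matrix (Fin n) (Fin n) ℂ →L[ℝ] Matrix (Fin n) (Fin n) ℂ :=
  LinearMap.toContinuousLinearMap
    { toFun := fun M => Mᴴ
      map_add' := fun A B => Matrix.conjTranspose_add A B
      map_smul' := fun r M => by
        simp [Matrix.conjTranspose_smul] }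

@[simp] lemma ctCLM_apply (M : Matrix (Fin n) (Fin n) ℂ) : ctCLM n M = Mᴴ := rfl

lemma deriv_isHermitian (S S' : ℝ → Matrix (Fin n) (Fin n) ℂ)
    (hderiv : ∀ l : ℝ, HasDerivAt S (S' l) l)
    (hherm : ∀ l : ℝ, (S l).IsHermitian) (l : ℝ) : (S' l)ᴴ = S' l := by
  have h1 : HasDerivAt (fun t => (S t)ᴴ) ((S' l)ᴴ) l := by
    have h := (ctCLM n).hasFDerivAt.comp_hasDerivAt l (hderiv l)
    exact h
  have h2 : (fun t => (S t)ᴴ) = S := funext fun t => hherm t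
  rw [h2] at h1
  exact h1.unique (hderiv l)

end

/-- `⟨dS⟩ = 0`: for a differentiable family of Hermitian entropy matrices
`S(λ)` normalized by `Re tr(exp(-S(λ)/k)) = 1`, the value of the derivative vanishes:
`tr(exp(-S(λ)/k)·S'(λ)) = 0` for every `λ`. -/
theorem value_of_entropy_differential_vanishes
    {n : ℕ} (hn : 1 ≤ n) (k : ℝ) (hk : 0 < k)
    (S S' : ℝ → Matrix (Fin n) (Fin n) ℂ)
    (hderiv : ∀ l : ℝ, HasDerivAt S (S' l) l)
    (hherm : ∀ l : ℝ, (S l).IsHermitian)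
    (hnorm : ∀ l : ℝ, (Matrix.trace (NormedSpace.exp (-(k⁻¹ • S l)))).re = 1) :
    ∀ l : ℝ, Matrix.trace (NormedSpace.exp (-(k⁻¹ • S l)) * S' l) = 0 := by
  intro l
  haveI : Nonempty (Fin n) := ⟨⟨0, hn⟩⟩
  haveI : ContinuousStar (Matrix (Fin n) (Fin n) ℂ) := ⟨(ctCLM n).continuous⟩
  set A : ℝ → Matrix (Fin n) (Fin n) ℂ := fun t => -(k⁻¹ • S t) with hA
  set B : Matrix (Fin n) (Fin n) ℂ := -(k⁻¹ • S' l) with hB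
  have hA' : HasDerivAt A B l := ((hderiv l).const_smul k⁻¹).neg
  have hF := hasFDerivAt_trace_exp hn (A l)
  have hchain : HasDerivAt (fun t => (exp (A t)).trace)
      (((expTraceDeriv (A l)).restrictScalars ℝ) B) l :=
    (hF.restrictScalars ℝ).comp_hasDerivAt l hA'
  set D : ℂ := (exp (A l) * B).trace with hD
  have hchain' : HasDerivAt (fun t => (exp (A t)).trace) D l := hchain
  have hre : HasDerivAt (fun t => ((exp (A t)).trace).re) D.re l :=
    Complex.reCLM.hasFDerivAt.comp_hasDerivAt l hchain'
  have hconst : (fun t => ((exp (A t)).trace).re) = fun _ => (1 : ℝ) :=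
    funext fun t => hnorm t
  rw [hconst] at hre
  have hDre : D.re = 0 := hre.unique (hasDerivAt_const l 1)
  -- Hermitian facts
  have hSherm' : (S' l)ᴴ = S' l := deriv_isHermitian S S' hderiv hherm l
  have hAherm : (A l)ᴴ = A l := by
    show (-(k⁻¹ • S l))ᴴ = -(k⁻¹ • S l)
    rw [Matrix.conjTranspose_neg, Matrix.conjTranspose_smul, star_trivial, hherm l]
  have hEherm : (exp (A l))ᴴ = exp (A l) := by
    calc (exp (A l))ᴴ = star (exp (A l)) := rfl
      _ = exp (star (A l)) := star_exp (A l)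
      _ = exp (A l) := by rw [show star (A l) = (A l)ᴴ from rfl, hAherm]
  have hBherm : Bᴴ = B := by
    rw [hB, Matrix.conjTranspose_neg, Matrix.conjTranspose_smul, star_trivial, hSherm']
  have hreal : star D = D := by
    rw [hD, ← Matrix.trace_conjTranspose, Matrix.conjTranspose_mul, hBherm, hEherm,
      Matrix.trace_mul_comm]
  have hDim : D.im = 0 := by
    have h := congrArg Complex.im hreal
    simp only [Complex.star_def, Complex.conj_im] at h
    linarith
  have hD0 : D = 0 := by
    apply Complex.ext <;> simp [hDre, hDim]
  have hsplit : D = -(k⁻¹ • (exp (A l) * S' l).trace) := by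
    rw [hD, hB, mul_neg, Matrix.trace_neg, Matrix.mul_smul, Matrix.trace_smul]
  rw [hD0] at hsplit
  have hk' : k⁻¹ ≠ 0 := inv_ne_zero (ne_of_gt hk)
  have h0 : k⁻¹ • (exp (A l) * S' l).trace = 0 := neg_eq_zero.mp hsplit.symm
  show Matrix.trace (exp (A l) * S' l) = 0
  rcases smul_eq_zero.mp h0 with h | h
  · exact absurd h hk'
  · exact h
end

section
/- Let n ≥ 1, let k > 0 and T > 0 be real constants, let H and X₁, …, X_m be Hermitian complex n×n matrices, and let α ∈ ℝ^m satisfy the equation of state Re trace(exp(−(H − ∑ⱼ αⱼ·Xⱼ)/(k·T))) = 1. Let S be any Hermitian complex n×n matrix with Re trace(exp(−S/k)) = 1, and set H̄ = Re trace(exp(−S/k)·H), S̄ = Re trace(exp(−S/k)·S), X̄ⱼ = Re trace(exp(−S/k)·Xⱼ). Then H̄ ≥ T·S̄ + ∑ⱼ αⱼ·X̄ⱼ, and equality holds if and only if S = T⁻¹·(H − ∑ⱼ αⱼ·Xⱼ). -/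
open Matrix

lemma scalar_klein (u v : ℝ) : Real.exp u + (v - u) * Real.exp u ≤ Real.exp v := by
  have h := Real.add_one_le_exp (v - u)
  have hp := Real.exp_pos u
  have h2 : ((v - u) + 1) * Real.exp u ≤ Real.exp (v - u) * Real.exp u :=
    mul_le_mul_of_nonneg_right h (le_of_lt hp)
  rw [← Real.exp_add] at h2
  have hv : v - u + u = v := by ring
  rw [hv] at h2; nlinarith

lemma scalar_klein_strict {u v : ℝ} (h : u ≠ v) :
    Real.exp u + (v - u) * Real.exp u < Real.exp v := by
  have h1 := Real.add_one_lt_exp (sub_ne_zero.mpr (Ne.symm h))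
  have h2 := Real.exp_pos u
  have h3 : ((v - u) + 1) * Real.exp u < Real.exp (v - u) * Real.exp u :=
    mul_lt_mul_of_pos_right h1 h2
  rw [← Real.exp_add] at h3
  have hv : v - u + u = v := by ring
  rw [hv] at h3; nlinarith

/-- exp of minus a Hermitian matrix via its spectral decomposition. -/
lemma exp_neg_hermitian {n : ℕ} {A : Matrix (Fin n) (Fin n) ℂ} (hA : A.IsHermitian) :
    NormedSpace.exp (-A) = (hA.eigenvectorUnitary : Matrix (Fin n) (Fin n) ℂ)
      * diagonal (fun i => (Real.exp (-(hA.eigenvalues i)) : ℂ))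
      * star (hA.eigenvectorUnitary : Matrix (Fin n) (Fin n) ℂ) := by
  set U : Matrix (Fin n) (Fin n) ℂ := (hA.eigenvectorUnitary : Matrix (Fin n) (Fin n) ℂ)
  have hU : U * star U = 1 := (Matrix.mem_unitaryGroup_iff).mp hA.eigenvectorUnitary.2
  have hU' : star U * U = 1 := (Matrix.mem_unitaryGroup_iff').mp hA.eigenvectorUnitary.2
  have hUinv : U⁻¹ = star U := Matrix.inv_eq_right_inv hU
  have hUu : IsUnit U := ⟨⟨U, star U, hU, hU'⟩, rfl⟩
  have hspec : -A = U * diagonal (fun i => -((hA.eigenvalues i : ℝ) : ℂ)) * U⁻¹ := by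
    rw [hUinv, ← diagonal_neg]
    conv_lhs => rw [hA.spectral_theorem]
    rw [Matrix.mul_neg, Matrix.neg_mul]
    rfl
  rw [hspec, Matrix.exp_conj U _ hUu, Matrix.exp_diagonal, hUinv]
  have hfun : NormedSpace.exp (fun i => -((hA.eigenvalues i : ℝ) : ℂ))
      = fun i => ((Real.exp (-(hA.eigenvalues i)) : ℝ) : ℂ) := by
    funext i
    rw [Pi.exp_def, ← Complex.exp_eq_exp_ℂ]
    simp [Function.comp, ← Complex.ofReal_neg, ← Complex.ofReal_exp]
  rw [hfun]

lemma trace_conj_unitary {n : ℕ} (U D : Matrix (Fin n) (Fin n) ℂ)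
    (hU' : star U * U = 1) : trace (U * D * star U) = trace D := by
  rw [Matrix.trace_mul_comm (U * D) (star U), ← Matrix.mul_assoc, hU', Matrix.one_mul]

lemma trace_sandwich {n : ℕ} (U V : Matrix (Fin n) (Fin n) ℂ) (p q : Fin n → ℝ) :
    trace ((U * diagonal (fun i => ((p i : ℝ) : ℂ)) * star U)
      * (V * diagonal (fun j => ((q j : ℝ) : ℂ)) * star V))
    = ((∑ i, ∑ j, p i * q j * Complex.normSq ((star U * V) i j) : ℝ) : ℂ) := by
  set P := diagonal (fun i => ((p i : ℝ) : ℂ)) with hP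
  set Q := diagonal (fun j => ((q j : ℝ) : ℂ)) with hQ
  have h1 : (U * P * star U) * (V * Q * star V)
      = U * (P * (star U * (V * (Q * star V)))) := by simp only [Matrix.mul_assoc]
  rw [h1, Matrix.trace_mul_comm]
  have h2 : P * (star U * (V * (Q * star V))) * U
      = P * ((star U * V) * Q * star (star U * V)) := by
    rw [Matrix.star_mul, star_star]
    simp only [Matrix.mul_assoc]
  rw [h2]
  set W := star U * V with hW
  have h3 : ∀ i j, (W * Q * star W) i j = ∑ l, W i l * (q l : ℂ) * star (W j l) := by
    intro i j
    rw [Matrix.mul_apply]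
    congr 1
    funext l
    rw [Matrix.mul_diagonal, Matrix.star_apply]
  rw [Matrix.trace]
  push_cast
  refine Finset.sum_congr rfl fun i _ => ?_
  rw [Matrix.diag_apply, Matrix.diagonal_mul, h3, Finset.mul_sum]
  refine Finset.sum_congr rfl fun j _ => ?_
  rw [Complex.star_def, mul_comm (W i j) ((q j : ℝ) : ℂ), mul_assoc ((q j : ℝ) : ℂ),
    Complex.mul_conj]
  ring

lemma isHermitian_real_smul {n : ℕ} (r : ℝ) {M : Matrix (Fin n) (Fin n) ℂ}
    (hM : M.IsHermitian) : (r • M).IsHermitian := by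
  unfold Matrix.IsHermitian
  rw [conjTranspose_smul, star_trivial, hM]

lemma normSq_row_sum {n : ℕ} {W : Matrix (Fin n) (Fin n) ℂ} (hW : W * star W = 1) (i : Fin n) :
    ∑ j, Complex.normSq (W i j) = 1 := by
  have h := congrArg (fun M : Matrix (Fin n) (Fin n) ℂ => M i i) hW
  simp only [Matrix.mul_apply, Matrix.star_apply, Matrix.one_apply_eq] at h
  have h2 : ((∑ j, Complex.normSq (W i j) : ℝ) : ℂ) = 1 := by
    push_cast
    rw [← h]
    exact Finset.sum_congr rfl fun j _ => by rw [Complex.star_def, Complex.mul_conj]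
  exact_mod_cast h2

lemma normSq_col_sum {n : ℕ} {W : Matrix (Fin n) (Fin n) ℂ} (hW : star W * W = 1) (j : Fin n) :
    ∑ i, Complex.normSq (W i j) = 1 := by
  have h := congrArg (fun M : Matrix (Fin n) (Fin n) ℂ => M j j) hW
  simp only [Matrix.mul_apply, Matrix.star_apply, Matrix.one_apply_eq] at h
  have h2 : ((∑ i, Complex.normSq (W i j) : ℝ) : ℂ) = 1 := by
    push_cast
    rw [← h]
    exact Finset.sum_congr rfl fun i _ => by
      rw [Complex.star_def, mul_comm, Complex.mul_conj]
  exact_mod_cast h2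

lemma klein {n : ℕ} (A B : Matrix (Fin n) (Fin n) ℂ)
    (hA : A.IsHermitian) (hB : B.IsHermitian) :
    ((Matrix.trace (NormedSpace.exp (-A))).re - (Matrix.trace (NormedSpace.exp (-B))).re
      ≤ (Matrix.trace (NormedSpace.exp (-A) * (B - A))).re)
    ∧ ((Matrix.trace (NormedSpace.exp (-A) * (B - A))).re
        = (Matrix.trace (NormedSpace.exp (-A))).re
          - (Matrix.trace (NormedSpace.exp (-B))).re ↔ A = B) := by
  classical
  set U : Matrix (Fin n) (Fin n) ℂ := (hA.eigenvectorUnitary : Matrix (Fin n) (Fin n) ℂ) with hUdef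
  set V : Matrix (Fin n) (Fin n) ℂ := (hB.eigenvectorUnitary : Matrix (Fin n) (Fin n) ℂ) with hVdef
  set a : Fin n → ℝ := hA.eigenvalues with hadef
  set b : Fin n → ℝ := hB.eigenvalues with hbdef
  set p : Fin n → ℝ := fun i => Real.exp (-(a i)) with hpdef
  set q : Fin n → ℝ := fun j => Real.exp (-(b j)) with hqdef
  have hUU : star U * U = 1 := (Matrix.mem_unitaryGroup_iff').mp hA.eigenvectorUnitary.2
  have hUU' : U * star U = 1 := (Matrix.mem_unitaryGroup_iff).mp hA.eigenvectorUnitary.2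
  have hVV : star V * V = 1 := (Matrix.mem_unitaryGroup_iff').mp hB.eigenvectorUnitary.2
  have hVV' : V * star V = 1 := (Matrix.mem_unitaryGroup_iff).mp hB.eigenvectorUnitary.2
  set W : Matrix (Fin n) (Fin n) ℂ := star U * V with hWdef
  set c : Fin n → Fin n → ℝ := fun i j => Complex.normSq (W i j) with hcdef
  have hWW : W * star W = 1 := by
    rw [hWdef, Matrix.star_mul, star_star]
    have h : V * (star V * U) = U := by rw [← Matrix.mul_assoc, hVV', Matrix.one_mul]
    rw [Matrix.mul_assoc, h, hUU]
  have hWW' : star W * W = 1 := by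
    rw [hWdef, Matrix.star_mul, star_star]
    have h : U * (star U * V) = V := by rw [← Matrix.mul_assoc, hUU', Matrix.one_mul]
    rw [Matrix.mul_assoc, h, hVV]
  have hrow : ∀ i, ∑ j, c i j = 1 := fun i => normSq_row_sum hWW i
  have hcol : ∀ j, ∑ i, c i j = 1 := fun j => normSq_col_sum hWW' j
  have hexpA : NormedSpace.exp (-A)
      = U * diagonal (fun i => ((p i : ℝ) : ℂ)) * star U := exp_neg_hermitian hA
  have hexpB : NormedSpace.exp (-B)
      = V * diagonal (fun j => ((q j : ℝ) : ℂ)) * star V := exp_neg_hermitian hB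
  have hBspec : B = V * diagonal (fun j => ((b j : ℝ) : ℂ)) * star V := by
    conv_lhs => rw [hB.spectral_theorem]
    rfl
  have hAspec : A = U * diagonal (fun i => ((a i : ℝ) : ℂ)) * star U := by
    conv_lhs => rw [hA.spectral_theorem]
    rfl
  -- the four trace values
  have E1 : (Matrix.trace (NormedSpace.exp (-A))).re = ∑ i, p i := by
    rw [hexpA, trace_conj_unitary _ _ hUU, Matrix.trace_diagonal]
    rw [show (∑ i, ((p i : ℝ) : ℂ)) = ((∑ i, p i : ℝ) : ℂ) by push_cast; rfl, Complex.ofReal_re]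
  have E2 : (Matrix.trace (NormedSpace.exp (-B))).re = ∑ j, q j := by
    rw [hexpB, trace_conj_unitary _ _ hVV, Matrix.trace_diagonal]
    rw [show (∑ j, ((q j : ℝ) : ℂ)) = ((∑ j, q j : ℝ) : ℂ) by push_cast; rfl, Complex.ofReal_re]
  have E3 : (Matrix.trace (NormedSpace.exp (-A) * B)).re
      = ∑ i, ∑ j, p i * b j * c i j := by
    rw [hexpA]
    conv_lhs => rw [hBspec]
    rw [trace_sandwich, Complex.ofReal_re]
  have E4 : (Matrix.trace (NormedSpace.exp (-A) * A)).re = ∑ i, p i * a i := by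
    rw [hexpA]
    conv_lhs => rw [hAspec]
    have hcol2 : U * diagonal (fun i => ((p i : ℝ) : ℂ)) * star U
        * (U * diagonal (fun i => ((a i : ℝ) : ℂ)) * star U)
        = U * (diagonal (fun i => ((p i : ℝ) : ℂ)) * diagonal (fun i => ((a i : ℝ) : ℂ)))
          * star U := by
      have h : star U * (U * (diagonal (fun i => ((a i : ℝ) : ℂ)) * star U))
          = diagonal (fun i => ((a i : ℝ) : ℂ)) * star U := by
        rw [← Matrix.mul_assoc, hUU, Matrix.one_mul]
      simp only [Matrix.mul_assoc, h]
    rw [hcol2, trace_conj_unitary _ _ hUU, Matrix.diagonal_mul_diagonal, Matrix.trace_diagonal]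
    rw [show (∑ i, (((p i : ℝ) : ℂ) * ((a i : ℝ) : ℂ))) = ((∑ i, p i * a i : ℝ) : ℂ) by
      push_cast; rfl, Complex.ofReal_re]
  -- the value to study
  have hval : (Matrix.trace (NormedSpace.exp (-A) * (B - A))).re
      = (∑ i, ∑ j, p i * b j * c i j) - ∑ i, p i * a i := by
    rw [Matrix.mul_sub, Matrix.trace_sub, Complex.sub_re, E3, E4]
  -- rewrite single sums as double sums
  have h1 : ∑ i, p i = ∑ i, ∑ j, p i * c i j :=
    Finset.sum_congr rfl fun i _ => by rw [← Finset.mul_sum, hrow i, mul_one]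
  have h2 : ∑ i, p i * a i = ∑ i, ∑ j, p i * a i * c i j :=
    Finset.sum_congr rfl fun i _ => by rw [← Finset.mul_sum, hrow i, mul_one]
  have h3 : ∑ j, q j = ∑ i, ∑ j, q j * c i j := by
    rw [Finset.sum_comm]
    exact Finset.sum_congr rfl fun j _ => by rw [← Finset.mul_sum, hcol j, mul_one]
  set g : Fin n → Fin n → ℝ := fun i j => q j - p i + (b j - a i) * p i with hgdef
  have hDelta : (Matrix.trace (NormedSpace.exp (-A) * (B - A))).re
      - ((Matrix.trace (NormedSpace.exp (-A))).re
        - (Matrix.trace (NormedSpace.exp (-B))).re)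
      = ∑ i, ∑ j, g i j * c i j := by
    have hsplit : ∑ i, ∑ j, g i j * c i j
        = (∑ i, ∑ j, q j * c i j) - (∑ i, ∑ j, p i * c i j)
          + ((∑ i, ∑ j, p i * b j * c i j) - ∑ i, ∑ j, p i * a i * c i j) := by
      simp only [← Finset.sum_add_distrib, ← Finset.sum_sub_distrib]
      exact Finset.sum_congr rfl fun i _ => Finset.sum_congr rfl fun j _ => by
        rw [hgdef]; ring
    rw [hval, E1, E2, h1, h2, h3, hsplit]
    ring
  have hgnonneg : ∀ i j, 0 ≤ g i j := by
    intro i j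
    have := scalar_klein (-(a i)) (-(b j))
    rw [hgdef]
    simp only [hpdef, hqdef]
    nlinarith [this]
  have hcnonneg : ∀ i j, 0 ≤ c i j := fun i j => Complex.normSq_nonneg _
  have hsumnonneg : 0 ≤ ∑ i, ∑ j, g i j * c i j :=
    Finset.sum_nonneg fun i _ => Finset.sum_nonneg fun j _ =>
      mul_nonneg (hgnonneg i j) (hcnonneg i j)
  constructor
  · linarith [hDelta, hsumnonneg]
  constructor
  · -- equality implies A = B
    intro heq
    have hzero : ∑ i, ∑ j, g i j * c i j = 0 := by rw [← hDelta, heq]; ring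
    have hterms : ∀ i ∈ Finset.univ, ∀ j ∈ Finset.univ, g i j * c i j = 0 := by
      have h := (Finset.sum_eq_zero_iff_of_nonneg
        (fun i _ => Finset.sum_nonneg fun j _ =>
          mul_nonneg (hgnonneg i j) (hcnonneg i j))).mp hzero
      intro i hi j hj
      exact (Finset.sum_eq_zero_iff_of_nonneg
        (fun j _ => mul_nonneg (hgnonneg i j) (hcnonneg i j))).mp (h i hi) j hj
    have hkey : ∀ i j, ((a i : ℂ) - (b j : ℂ)) * W i j = 0 := by
      intro i j
      by_cases hab : a i = b j
      · rw [hab]; ring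
      · have hgpos : 0 < g i j := by
          have := scalar_klein_strict (u := -(a i)) (v := -(b j))
            (by intro hc; exact hab (by linarith [neg_injective hc]))
          rw [hgdef]
          simp only [hpdef, hqdef]
          nlinarith [this]
        have hc0 : c i j = 0 := by
          rcases mul_eq_zero.mp (hterms i (Finset.mem_univ i) j (Finset.mem_univ j)) with h | h
          · exact absurd h (ne_of_gt hgpos)
          · exact h
        have : W i j = 0 := by
          have := Complex.normSq_eq_zero.mp hc0
          exact this
        rw [this, mul_zero]
    have e1 : star U * A * V = diagonal (fun i => ((a i : ℝ) : ℂ)) * W := by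
      conv_lhs => rw [hAspec]
      calc star U * (U * diagonal (fun i => ((a i : ℝ) : ℂ)) * star U) * V
          = (star U * U) * (diagonal (fun i => ((a i : ℝ) : ℂ)) * (star U * V)) := by
            simp only [Matrix.mul_assoc]
        _ = diagonal (fun i => ((a i : ℝ) : ℂ)) * W := by
            rw [hUU, Matrix.one_mul, hWdef]
    have e2 : star U * B * V = W * diagonal (fun j => ((b j : ℝ) : ℂ)) := by
      conv_lhs => rw [hBspec]
      calc star U * (V * diagonal (fun j => ((b j : ℝ) : ℂ)) * star V) * V
          = (star U * V) * (diagonal (fun j => ((b j : ℝ) : ℂ)) * (star V * V)) := by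
            simp only [Matrix.mul_assoc]
        _ = W * diagonal (fun j => ((b j : ℝ) : ℂ)) := by
            rw [hVV, Matrix.mul_one, hWdef]
    have e3 : star U * (A - B) * V = 0 := by
      rw [Matrix.mul_sub, Matrix.sub_mul, e1, e2]
      ext i j
      rw [Matrix.sub_apply, Matrix.diagonal_mul, Matrix.mul_diagonal, Matrix.zero_apply]
      have := hkey i j
      ring_nf
      ring_nf at this
      linear_combination this
    have e4 : A - B = U * (star U * (A - B) * V) * star V := by
      calc A - B = (U * star U) * (A - B) * (V * star V) := by
            rw [hUU', hVV', Matrix.one_mul, Matrix.mul_one]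
        _ = U * (star U * (A - B) * V) * star V := by simp only [Matrix.mul_assoc]
    have : A - B = 0 := by rw [e4, e3, Matrix.mul_zero, Matrix.zero_mul]
    exact sub_eq_zero.mp this
  · -- A = B implies equality
    intro heq
    subst heq
    simp [sub_self]

lemma re_real_smul (r : ℝ) (z : ℂ) : (r • z).re = r * z.re := by
  rw [Complex.real_smul]
  simp [Complex.mul_re]

/-- Comparison of an arbitrary Gibbs state with thermal states: if `(T, α)`
satisfies the equation of state `Re tr(exp(-(H - ∑ αⱼXⱼ)/(kT))) = 1`, then the values
`H̄, S̄, X̄ⱼ` in any Gibbs state with entropy `S` satisfy `H̄ ≥ T·S̄ + ∑ αⱼ·X̄ⱼ`, with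
equality iff `S = T⁻¹(H - ∑ αⱼXⱼ)`. -/
theorem thermal_state_comparison
    {n m : ℕ} (hn : 1 ≤ n) (k T : ℝ) (hk : 0 < k) (hT : 0 < T)
    (H : Matrix (Fin n) (Fin n) ℂ) (X : Fin m → Matrix (Fin n) (Fin n) ℂ)
    (hH : H.IsHermitian) (hX : ∀ j, (X j).IsHermitian)
    (α : Fin m → ℝ)
    (heos : (Matrix.trace (NormedSpace.exp
        (-((k * T)⁻¹ • (H - ∑ j, α j • X j))))).re = 1)
    (S : Matrix (Fin n) (Fin n) ℂ) (hS : S.IsHermitian)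
    (hS1 : (Matrix.trace (NormedSpace.exp (-(k⁻¹ • S)))).re = 1) :
    (T * (Matrix.trace (NormedSpace.exp (-(k⁻¹ • S)) * S)).re
        + ∑ j, α j * (Matrix.trace (NormedSpace.exp (-(k⁻¹ • S)) * X j)).re
      ≤ (Matrix.trace (NormedSpace.exp (-(k⁻¹ • S)) * H)).re) ∧
      ((T * (Matrix.trace (NormedSpace.exp (-(k⁻¹ • S)) * S)).re
          + ∑ j, α j * (Matrix.trace (NormedSpace.exp (-(k⁻¹ • S)) * X j)).re
        = (Matrix.trace (NormedSpace.exp (-(k⁻¹ • S)) * H)).re)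
        ↔ S = T⁻¹ • (H - ∑ j, α j • X j)) := by
  have hsum : (∑ j, α j • X j).IsHermitian := by
    unfold Matrix.IsHermitian
    rw [conjTranspose_sum]
    exact Finset.sum_congr rfl fun j _ => by
      rw [conjTranspose_smul, star_trivial, hX j]
  set Sc : Matrix (Fin n) (Fin n) ℂ := T⁻¹ • (H - ∑ j, α j • X j) with hScdef
  have hSc : Sc.IsHermitian := isHermitian_real_smul _ (hH.sub hsum)
  have hAh : (k⁻¹ • S).IsHermitian := isHermitian_real_smul _ hS
  have hBh : (k⁻¹ • Sc).IsHermitian := isHermitian_real_smul _ hSc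
  have hkT : (k * T)⁻¹ • (H - ∑ j, α j • X j) = k⁻¹ • Sc := by
    rw [hScdef, smul_smul, mul_inv]
  have heos' : (Matrix.trace (NormedSpace.exp (-(k⁻¹ • Sc)))).re = 1 := by
    rw [← hkT]; exact heos
  obtain ⟨hineq, hiff⟩ := klein (k⁻¹ • S) (k⁻¹ • Sc) hAh hBh
  set ρ : Matrix (Fin n) (Fin n) ℂ := NormedSpace.exp (-(k⁻¹ • S)) with hρdef
  set Hbar : ℝ := (Matrix.trace (ρ * H)).re with hHbar
  set Sbar : ℝ := (Matrix.trace (ρ * S)).re with hSbar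
  set E : ℝ := ∑ j, α j * (Matrix.trace (ρ * X j)).re with hEdef
  have hTT : T * T⁻¹ = 1 := mul_inv_cancel₀ hT.ne'
  have hkk : k * k⁻¹ = 1 := mul_inv_cancel₀ hk.ne'
  -- trace of ρ * Sc
  have htrSc : (Matrix.trace (ρ * Sc)).re = T⁻¹ * (Hbar - E) := by
    rw [hScdef, mul_smul_comm, Matrix.trace_smul, re_real_smul]
    congr 1
    rw [Matrix.mul_sub, Matrix.trace_sub, Complex.sub_re]
    congr 1
    rw [Finset.mul_sum, Matrix.trace_sum]
    rw [show ∀ (f : Fin m → ℂ), (∑ j, f j).re = ∑ j, (f j).re from fun f => Complex.re_sum _ _]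
    exact Finset.sum_congr rfl fun j _ => by
      rw [mul_smul_comm, Matrix.trace_smul, re_real_smul]
  have htrace : (Matrix.trace (ρ * (k⁻¹ • Sc - k⁻¹ • S))).re
      = k⁻¹ * (T⁻¹ * (Hbar - E) - Sbar) := by
    rw [← smul_sub, mul_smul_comm, Matrix.trace_smul, re_real_smul, Matrix.mul_sub,
      Matrix.trace_sub, Complex.sub_re, htrSc]
  rw [hS1, heos', htrace] at hineq hiff
  constructor
  · -- inequality
    have h0 : 0 ≤ k⁻¹ * (T⁻¹ * (Hbar - E) - Sbar) := by linarith
    have h1 : 0 ≤ T⁻¹ * (Hbar - E) - Sbar := by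
      rcases (mul_nonneg_iff_of_pos_left (inv_pos.mpr hk)).mp h0 with h
      exact h
    have h4 : Sbar ≤ T⁻¹ * (Hbar - E) := by linarith
    have h5 : T * Sbar ≤ T * (T⁻¹ * (Hbar - E)) := mul_le_mul_of_nonneg_left h4 hT.le
    rw [← mul_assoc, hTT, one_mul] at h5
    linarith
  · constructor
    · intro heqval
      have h6 : T⁻¹ * (Hbar - E) - Sbar = 0 := by
        have : Hbar - E = T * Sbar := by linarith
        rw [this, ← mul_assoc, inv_mul_cancel₀ hT.ne', one_mul, sub_self]
      have h7 : k⁻¹ * (T⁻¹ * (Hbar - E) - Sbar) = 1 - 1 := by rw [h6]; ring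
      have h8 : k⁻¹ • S = k⁻¹ • Sc := hiff.mp h7
      exact smul_right_injective (Matrix (Fin n) (Fin n) ℂ) (inv_ne_zero hk.ne') h8
    · intro hSeq
      have h8 : k⁻¹ • S = k⁻¹ • Sc := by rw [hSeq]
      have h7 := hiff.mpr h8
      have h6 : T⁻¹ * (Hbar - E) - Sbar = 0 := by
        have hkne : k⁻¹ ≠ 0 := inv_ne_zero hk.ne'
        have : k⁻¹ * (T⁻¹ * (Hbar - E) - Sbar) = 0 := by linarith
        rcases mul_eq_zero.mp this with h | h
        · exact absurd h hkne
        · exact h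
      have h9 : T * (T⁻¹ * (Hbar - E)) = T * Sbar := by
        have : T⁻¹ * (Hbar - E) = Sbar := by linarith
        rw [this]
      rw [← mul_assoc, hTT, one_mul] at h9
      linarith
end
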